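/- Let h : ℝ^{n₁} × ℝ^{n₂} → ℝ ∪ {+∞} be a proper lower semicontinuous convex function such that the set N = {x₂ ∈ ℝ^{n₂} : h^∞(0, x₂) ≤ 0} is a linear subspace. Then the marginal function g(x₁) = inf_{x₂} h(x₁, x₂) is a lower semicontinuous convex function, the infimum is attained whenever g(x₁) < +∞, and g^∞(x₁) = inf_{x₂} h^∞(x₁, x₂). -/

import Mathlib

noncomputable def recFn {E : Type*} [AddCommGroup E] [Module ℝ E]
    (h : E → EReal) (xbar x : E) : EReal :=
  ⨆ l : {l : ℝ // 0 < l}, (((l : ℝ)⁻¹ : ℝ) : EReal) * (h (xbar + (l : ℝ) • x) - h xbar)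

def EConvex {E : Type*} [AddCommGroup E] [Module ℝ E] (h : E → EReal) : Prop :=
  ∀ x y : E, ∀ a b : ℝ, 0 ≤ a → 0 ≤ b → a + b = 1 →
    h (a • x + b • y) ≤ (a : EReal) * h x + (b : EReal) * h y

open Filter Topology

set_option maxHeartbeats 1000000


variable {V : Type*} [NormedAddCommGroup V] [NormedSpace ℝ V]

/-- Recession cone (all-base-points version). -/
def recCone (S : Set V) : Set V := {d | ∀ c ∈ S, ∀ t : ℝ, 0 ≤ t → c + t • d ∈ S}

lemma recCone_zero_mem (S : Set V) : (0 : V) ∈ recCone S := by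
  intro c hc t ht; simpa using hc

lemma isClosed_recCone {S : Set V} (hS : IsClosed S) : IsClosed (recCone S) := by
  have : recCone S = ⋂ (c : V) (_ : c ∈ S) (t : ℝ) (_ : 0 ≤ t),
      (fun d : V => c + t • d) ⁻¹' S := by
    ext d; simp [recCone]
  rw [this]
  refine isClosed_iInter fun c => isClosed_iInter fun hc => isClosed_iInter fun t =>
    isClosed_iInter fun ht => hS.preimage (continuous_const.add (continuous_const_smul _))

lemma recCone_add_mem {S : Set V} (hconv : Convex ℝ S) {d e : V}
    (hd : d ∈ recCone S) (he : e ∈ recCone S) : d + e ∈ recCone S := by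
  intro c hc t ht
  have h1 : c + (2 * t) • d ∈ S := hd c hc _ (by linarith)
  have h2 : c + (2 * t) • e ∈ S := he c hc _ (by linarith)
  have := hconv h1 h2 (by norm_num : (0:ℝ) ≤ 1/2) (by norm_num : (0:ℝ) ≤ 1/2) (by norm_num)
  have heq : (1/2 : ℝ) • (c + (2 * t) • d) + (1/2 : ℝ) • (c + (2 * t) • e)
      = c + t • (d + e) := by
    rw [smul_add, smul_add, smul_smul, smul_smul, smul_add]
    rw [show (1/2 : ℝ) * (2 * t) = t by ring]
    module
  rwa [heq] at this

lemma recCone_smul_mem {S : Set V} {d : V} (hd : d ∈ recCone S) {a : ℝ} (ha : 0 ≤ a) :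
    a • d ∈ recCone S := by
  intro c hc t ht
  rw [smul_smul]
  exact hd c hc _ (mul_nonneg ht ha)

/-- Base-point independence: a ray from one point certifies recession. -/
lemma mem_recCone_of_ray {S : Set V} (hS : IsClosed S) (hconv : Convex ℝ S)
    {c₀ d : V} (hc₀ : c₀ ∈ S) (hray : ∀ t : ℝ, 0 ≤ t → c₀ + t • d ∈ S) :
    d ∈ recCone S := by
  intro y hy t ht
  -- y + t•d = lim_n [(1 - s n)•y + (s n)•(c₀ + m n • d)], s n = t/(t+n+1)
  set m : ℕ → ℝ := fun n => t + n + 1 with hm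
  have hmpos : ∀ n, 0 < m n := fun n => by positivity
  set s : ℕ → ℝ := fun n => t / m n with hs
  have hs0 : ∀ n, 0 ≤ s n := fun n => div_nonneg ht (hmpos n).le
  have hs1 : ∀ n, s n ≤ 1 := fun n => by
    rw [div_le_one (hmpos n)]
    have : (0:ℝ) ≤ (n:ℝ) := Nat.cast_nonneg n
    simp only [hm]; linarith
  have hmem : ∀ n, (1 - s n) • y + s n • (c₀ + m n • d) ∈ S := fun n =>
    hconv hy (hray (m n) (hmpos n).le) (a := 1 - s n) (b := s n) (by linarith [hs1 n]) (hs0 n) (by ring)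
  have heq : ∀ n, (1 - s n) • y + s n • (c₀ + m n • d) = y + t • d + s n • (c₀ - y) := by
    intro n
    have : s n * m n = t := div_mul_cancel₀ t (hmpos n).ne'
    rw [smul_add, smul_smul, this]
    module
  have hstend : Tendsto s atTop (𝓝 0) := by
    apply Tendsto.div_atTop tendsto_const_nhds
    apply tendsto_atTop_mono (fun n : ℕ => ?_) tendsto_natCast_atTop_atTop
    simp only [hm]; linarith
  have htend : Tendsto (fun n => y + t • d + s n • (c₀ - y)) atTop (𝓝 (y + t • d)) := by
    have : Tendsto (fun n => s n • (c₀ - y)) atTop (𝓝 (0 : V)) := by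
      have := hstend.smul (tendsto_const_nhds : Tendsto (fun _ : ℕ => c₀ - y) atTop (𝓝 (c₀ - y)))
      simpa using this
    simpa using (tendsto_const_nhds (x := y + t • d)).add this
  refine hS.mem_of_tendsto htend ?_
  filter_upwards [eventually_atTop.2 ⟨0, fun n _ => hmem n⟩] with n hn
  rwa [heq n] at hn

/-- Blow-up lemma: normalized divergent sequences in a closed convex set give recession
directions. -/
lemma mem_recCone_of_blowup {S : Set V} (hS : IsClosed S) (hconv : Convex ℝ S)
    {c₀ d : V} (hc₀ : c₀ ∈ S) (c : ℕ → V) (hc : ∀ n, c n ∈ S) (r : ℕ → ℝ)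
    (hr : Tendsto r atTop atTop)
    (hw : Tendsto (fun n => (r n)⁻¹ • (c n - c₀)) atTop (𝓝 d)) :
    d ∈ recCone S := by
  apply mem_recCone_of_ray hS hconv hc₀
  intro t ht
  have hev : ∀ᶠ n in atTop, c₀ + (t / r n) • (c n - c₀) ∈ S := by
    filter_upwards [hr.eventually_ge_atTop (max t 1)] with n hn
    have hrpos : 0 < r n := lt_of_lt_of_le one_pos (le_trans (le_max_right _ _) hn)
    have h01 : t / r n ≤ 1 := by
      rw [div_le_one hrpos]; exact le_trans (le_max_left t 1) hn
    have h00 : 0 ≤ t / r n := div_nonneg ht hrpos.le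
    have := hconv hc₀ (hc n) (a := 1 - t / r n) (b := t / r n) (by linarith) h00 (by ring)
    have heq : (1 - t / r n) • c₀ + (t / r n) • c n = c₀ + (t / r n) • (c n - c₀) := by
      module
    rwa [heq] at this
  have htend : Tendsto (fun n => c₀ + (t / r n) • (c n - c₀)) atTop (𝓝 (c₀ + t • d)) := by
    have h1 : Tendsto (fun n => (t / r n) • (c n - c₀)) atTop (𝓝 (t • d)) := by
      have : ∀ n, (t / r n) • (c n - c₀) = t • ((r n)⁻¹ • (c n - c₀)) := by
        intro n; rw [smul_smul, div_eq_mul_inv]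
      simp_rw [this]
      exact (tendsto_const_nhds (x := t)).smul hw
    exact (tendsto_const_nhds (x := c₀)).add h1
  exact hS.mem_of_tendsto htend hev

section Abstract

variable {E F : Type*} [NormedAddCommGroup E] [NormedSpace ℝ E] [FiniteDimensional ℝ E]
  [NormedAddCommGroup F] [NormedSpace ℝ F] [FiniteDimensional ℝ F]

variable {C : Set (E × F)}

/-- recCone of a slice is contained in recCone of the ambient set. -/
lemma recCone_subset_of_subset {D : Set (E × F)} (hC : IsClosed C) (hconvC : Convex ℝ C)
    (hDC : D ⊆ C) (hDne : D.Nonempty) : recCone D ⊆ recCone C := by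
  intro d hd
  obtain ⟨c₀, hc₀⟩ := hDne
  exact mem_recCone_of_ray hC hconvC (hDC hc₀) (fun t ht => hDC (hd c₀ hc₀ t ht))

/-- Dichotomy for real sequences. -/
lemma seq_dichotomy (u : ℕ → ℝ) :
    (∃ K : ℝ, ∃ᶠ n in atTop, u n ≤ K) ∨ Tendsto u atTop atTop := by
  by_cases h : ∃ K : ℝ, ∃ᶠ n in atTop, u n ≤ K
  · exact Or.inl h
  · push_neg at h
    refine Or.inr (tendsto_atTop.2 fun K => ?_)
    have := h K
    filter_upwards [this] with n hn
    exact hn.le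

/-- Blow-up contradiction lemma. -/
lemma blowup_contradiction {D : Set (E × F)} (hD : IsClosed D) (hDconv : Convex ℝ D)
    (hD0 : ∀ y : F, ((0 : E), y) ∈ recCone D → y = 0)
    {d₀ : E × F} (hd₀ : d₀ ∈ D) (c : ℕ → E × F) (hc : ∀ n, c n ∈ D)
    (h2 : Tendsto (fun n => ‖(c n).2‖) atTop atTop)
    (h1 : Tendsto (fun n => ‖(c n).1‖ / ‖(c n).2‖) atTop (𝓝 0)) : False := by
  set r : ℕ → ℝ := fun n => ‖(c n).2‖ with hr
  -- the normalized sequence is eventually bounded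
  have hbdd : ∀ᶠ n in atTop, ‖(r n)⁻¹ • (c n - d₀)‖ ≤ 2 + ‖d₀‖ := by
    filter_upwards [h2.eventually_ge_atTop (max 1 ‖d₀‖),
      h1.eventually (eventually_le_nhds (by norm_num : (0:ℝ) < 1))] with n hn hn1
    have hrpos : 0 < r n := lt_of_lt_of_le one_pos (le_trans (le_max_left _ _) hn)
    have hrpos' : (0:ℝ) < ‖(c n).2‖ := hrpos
    have hc1 : ‖(c n).1‖ ≤ r n := by
      rw [div_le_one hrpos'] at hn1; exact hn1
    have hnorm : ‖c n‖ ≤ 2 * r n := by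
      rw [Prod.norm_def]
      have hc2 : ‖(c n).2‖ = r n := rfl
      refine max_le (by linarith) (by rw [hc2]; linarith)
    rw [norm_smul, norm_inv, Real.norm_eq_abs, abs_of_pos hrpos]
    rw [inv_mul_le_iff₀ hrpos]
    calc ‖c n - d₀‖ ≤ ‖c n‖ + ‖d₀‖ := norm_sub_le _ _
      _ ≤ 2 * r n + ‖d₀‖ * 1 := by linarith
      _ ≤ 2 * r n + ‖d₀‖ * r n := by
          have h1' : (1:ℝ) ≤ r n := le_trans (le_max_left _ _) hn
          nlinarith [norm_nonneg d₀]
      _ = r n * (2 + ‖d₀‖) := by ring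
  -- extract an eventually-index N and use compactness
  obtain ⟨N, hN⟩ := eventually_atTop.1 hbdd
  set w : ℕ → E × F := fun n => (r (n + N))⁻¹ • (c (n + N) - d₀) with hw
  have hwball : ∀ n, w n ∈ Metric.closedBall (0 : E × F) (2 + ‖d₀‖) := by
    intro n
    rw [Metric.mem_closedBall, dist_zero_right]
    exact hN (n + N) (Nat.le_add_left _ _)
  obtain ⟨d, hdball, φ, hφ, hdtend⟩ :=
    (isCompact_closedBall (0 : E × F) (2 + ‖d₀‖)).tendsto_subseq hwball
  have haddN : Tendsto (fun n : ℕ => n + N) atTop atTop :=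
    tendsto_atTop_mono (fun n => Nat.le_add_right _ _) tendsto_id
  have hφtend : Tendsto (fun n => φ n + N) atTop atTop :=
    tendsto_atTop_mono (fun n => Nat.le_add_right _ _) hφ.tendsto_atTop
  -- d is a recession direction
  have hdrec : d ∈ recCone D := by
    apply mem_recCone_of_blowup hD hDconv hd₀ (fun n => c (φ n + N)) (fun n => hc _)
      (fun n => r (φ n + N)) (h2.comp hφtend)
    exact hdtend
  -- first component of d is zero
  have hd1 : d.1 = 0 := by
    have htend1 : Tendsto (fun n => (w (φ n)).1) atTop (𝓝 d.1) :=
      (continuous_fst.tendsto d).comp hdtend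
    have htend0 : Tendsto (fun n => (w n).1) atTop (𝓝 (0 : E)) := by
      have hnorm : Tendsto (fun n => ‖(w n).1‖) atTop (𝓝 0) := by
        have hle : ∀ᶠ n in atTop, ‖(w n).1‖ ≤ ‖(c (n+N)).1‖ / r (n+N) + ‖d₀.1‖ / r (n+N) := by
          filter_upwards [(h2.comp haddN).eventually_ge_atTop 1] with n hn
          have hrpos : (0:ℝ) < r (n + N) := lt_of_lt_of_le one_pos hn
          have : (w n).1 = (r (n+N))⁻¹ • ((c (n+N)).1 - d₀.1) := rfl
          rw [this, norm_smul, norm_inv, Real.norm_eq_abs, abs_of_pos hrpos]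
          rw [inv_mul_le_iff₀ hrpos]
          have := norm_sub_le (c (n+N)).1 d₀.1
          rw [← add_div, mul_comm, div_mul_cancel₀ _ hrpos.ne']
          linarith
        have hge : ∀ᶠ n in atTop, (0:ℝ) ≤ ‖(w n).1‖ :=
          Eventually.of_forall fun n => norm_nonneg _
        have hub : Tendsto (fun n => ‖(c (n+N)).1‖ / r (n+N) + ‖d₀.1‖ / r (n+N)) atTop (𝓝 0) := by
          have t1 : Tendsto (fun n => ‖(c (n+N)).1‖ / r (n+N)) atTop (𝓝 0) :=
            h1.comp haddN
          have t2 : Tendsto (fun n => ‖d₀.1‖ / r (n+N)) atTop (𝓝 0) :=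
            Tendsto.div_atTop tendsto_const_nhds (h2.comp haddN)
          simpa using t1.add t2
        have := squeeze_zero' hge hle hub
        exact this
      exact tendsto_zero_iff_norm_tendsto_zero.2 hnorm
    exact tendsto_nhds_unique htend1 (htend0.comp hφ.tendsto_atTop)
  -- so d = 0 by hD0
  have hd2 : d.2 = 0 := by
    apply hD0
    have : d = (d.1, d.2) := rfl
    rw [← hd1]
    simpa using hdrec
  -- but the second component has norm tending to 1
  have hnorm2 : Tendsto (fun n => ‖(w (φ n)).2‖) atTop (𝓝 ‖d.2‖) :=
    (continuous_snd.tendsto d).norm.comp hdtend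
  rw [hd2, norm_zero] at hnorm2
  have hlow : ∀ᶠ n in atTop, (1:ℝ)/2 ≤ ‖(w (φ n)).2‖ := by
    have h2' : Tendsto (fun n => r (φ n + N)) atTop atTop := h2.comp hφtend
    filter_upwards [h2'.eventually_ge_atTop (max 1 (2 * ‖d₀.2‖))] with n hn
    have hrpos : (0:ℝ) < r (φ n + N) := lt_of_lt_of_le one_pos (le_trans (le_max_left _ _) hn)
    have hkey : r (φ n + N) - ‖d₀.2‖ ≤ ‖(c (φ n + N)).2 - d₀.2‖ := by
      have h := norm_sub_norm_le (c (φ n + N)).2 d₀.2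
      have hrn : r (φ n + N) = ‖(c (φ n + N)).2‖ := rfl
      linarith
    have hw2 : (w (φ n)).2 = (r (φ n + N))⁻¹ • ((c (φ n + N)).2 - d₀.2) := rfl
    rw [hw2, norm_smul, norm_inv, Real.norm_eq_abs, abs_of_pos hrpos,
      le_inv_mul_iff₀ hrpos]
    have hd2' : 2 * ‖d₀.2‖ ≤ r (φ n + N) := le_trans (le_max_right _ _) hn
    nlinarith
  have hcontra := hnorm2.eventually (eventually_lt_nhds (by norm_num : (0:ℝ) < 1/2))
  obtain ⟨n, hn1, hn2⟩ := (hlow.and hcontra).exists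
  linarith

end Abstract
section Main

variable {E F : Type*} [NormedAddCommGroup E] [NormedSpace ℝ E] [FiniteDimensional ℝ E]
  [NormedAddCommGroup F] [NormedSpace ℝ F] [FiniteDimensional ℝ F]

variable {C : Set (E × F)}

/-- The data of the reduction to a slice with trivial vertical recession. -/
theorem exists_good_slice (hC : IsClosed C) (hconvC : Convex ℝ C) (hne : C.Nonempty)
    (hsym : ∀ y : F, ((0:E), y) ∈ recCone C → ((0:E), -y) ∈ recCone C) :
    ∃ D : Set (E × F), IsClosed D ∧ Convex ℝ D ∧ D.Nonempty ∧ D ⊆ C ∧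
      Prod.fst '' D = Prod.fst '' C ∧ (∀ y : F, ((0:E), y) ∈ recCone D → y = 0) := by
  classical
  -- the subspace W
  let W : Submodule ℝ F :=
    { carrier := {y | ((0:E), y) ∈ recCone C}
      add_mem' := by
        intro a b ha hb
        have := recCone_add_mem hconvC ha hb
        simpa using this
      zero_mem' := by
        exact recCone_zero_mem C
      smul_mem' := by
        intro a y hy
        rcases le_or_gt 0 a with ha | ha
        · have := recCone_smul_mem hy ha
          simpa [Prod.smul_mk] using this
        · have h1 : ((0:E), -y) ∈ recCone C := hsym y hy
          have := recCone_smul_mem h1 (neg_nonneg.2 ha.le)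
          have heq : (-a) • ((0:E), -y) = ((0:E), a • y) := by
            simp [Prod.smul_mk, smul_neg]
          rwa [heq] at this }
  obtain ⟨U, hWU⟩ := Submodule.exists_isCompl W
  have hUclosed : IsClosed (U : Set F) := Submodule.closed_of_finiteDimensional U
  set D : Set (E × F) := C ∩ {q | q.2 ∈ U} with hD
  have hDclosed : IsClosed D := hC.inter (hUclosed.preimage continuous_snd)
  have hDconv : Convex ℝ D := hconvC.inter (U.convex.linear_preimage (LinearMap.snd ℝ E F))
  -- decomposition: every point of C can be moved into D without changing fst
  have hdecomp : ∀ c ∈ C, ∃ u : F, (c.1, u) ∈ D := by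
    intro c hc
    have hmem : c.2 ∈ W ⊔ U := by rw [hWU.sup_eq_top]; trivial
    obtain ⟨w, hw, u, hu, hwu⟩ := Submodule.mem_sup.mp hmem
    have hnw : ((0:E), -w) ∈ recCone C := by
      have : -w ∈ W := neg_mem hw
      exact this
    have hcu : (c.1, u) ∈ C := by
      have := hnw c hc 1 zero_le_one
      have heq : c + (1:ℝ) • ((0:E), -w) = (c.1, u) := by
        have : u = c.2 - w := by rw [← hwu]; abel
        rw [this]
        ext <;> simp [sub_eq_add_neg]
      rwa [heq] at this
    exact ⟨u, hcu, hu⟩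
  have hne' : D.Nonempty := by
    obtain ⟨c, hc⟩ := hne
    obtain ⟨u, hu⟩ := hdecomp c hc
    exact ⟨_, hu⟩
  refine ⟨D, hDclosed, hDconv, hne', Set.inter_subset_left, ?_, ?_⟩
  · apply Set.Subset.antisymm (Set.image_mono Set.inter_subset_left)
    rintro x ⟨c, hc, rfl⟩
    obtain ⟨u, hu⟩ := hdecomp c hc
    exact ⟨(c.1, u), hu, rfl⟩
  · intro y hy
    have hyU : y ∈ U := by
      obtain ⟨d₀, hd₀⟩ := hne'
      have := hy d₀ hd₀ 1 zero_le_one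
      have h2 : d₀.2 + y ∈ U := by
        have heq : (d₀ + (1:ℝ) • ((0:E), y)).2 = d₀.2 + y := by simp
        rw [← heq]; exact this.2
      have := U.sub_mem h2 hd₀.2
      simpa using this
    have hyW : y ∈ W :=
      recCone_subset_of_subset hC hconvC Set.inter_subset_left hne' hy
    have : y ∈ W ⊓ U := ⟨hyW, hyU⟩
    rw [hWU.inf_eq_bot] at this
    simpa using this

theorem isClosed_fst_image (hC : IsClosed C) (hconvC : Convex ℝ C) (hne : C.Nonempty)
    (hsym : ∀ y : F, ((0:E), y) ∈ recCone C → ((0:E), -y) ∈ recCone C) :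
    IsClosed (Prod.fst '' C) := by
  obtain ⟨D, hDclosed, hDconv, hDne, hDC, hfst, hD0⟩ :=
    exists_good_slice hC hconvC hne hsym
  rw [← hfst]
  rw [← isSeqClosed_iff_isClosed]
  intro p x hp hx
  choose cfun hcfun hcfst using fun n => (hp n : p n ∈ Prod.fst '' D)
  rcases seq_dichotomy (fun n => ‖(cfun n).2‖) with ⟨K, hK⟩ | htop
  · -- bounded case: extract convergent subsequence
    obtain ⟨φ, hφ, hφK⟩ := extraction_of_frequently_atTop hK
    obtain ⟨N, hNbd⟩ := eventually_atTop.1 (hx.norm.eventually_le_const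
      (lt_add_one ‖x‖))
    set ψ : ℕ → ℕ := fun n => φ (n + N) with hψ
    have hψge : ∀ n, N ≤ ψ n := fun n =>
      le_trans (Nat.le_add_left _ _) (hφ.le_apply)
    have hψtop : Tendsto ψ atTop atTop :=
      hφ.tendsto_atTop.comp (tendsto_atTop_mono (fun n => Nat.le_add_right _ _) tendsto_id)
    have hball : ∀ n, cfun (ψ n) ∈ Metric.closedBall (0 : E × F) (max (‖x‖ + 1) K) := by
      intro n
      rw [Metric.mem_closedBall, dist_zero_right, Prod.norm_def]
      refine max_le_max ?_ (hφK (n + N))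
      rw [hcfst (ψ n)]
      exact hNbd (ψ n) (hψge n)
    obtain ⟨q, hqball, σ, hσ, hqtend⟩ :=
      (isCompact_closedBall (0 : E × F) (max (‖x‖ + 1) K)).tendsto_subseq hball
    have hqD : q ∈ D := hDclosed.mem_of_tendsto hqtend
      (Eventually.of_forall fun n => hcfun _)
    have hq1 : q.1 = x := by
      have ht1 : Tendsto (fun n => (cfun (ψ (σ n))).1) atTop (𝓝 q.1) :=
        (continuous_fst.tendsto q).comp hqtend
      have ht2 : Tendsto (fun n => (cfun (ψ (σ n))).1) atTop (𝓝 x) := by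
        simp_rw [fun n => hcfst (ψ (σ n))]
        exact hx.comp (hψtop.comp hσ.tendsto_atTop)
      exact tendsto_nhds_unique ht1 ht2
    exact ⟨q, hqD, hq1⟩
  · -- unbounded case: blow-up contradiction
    exfalso
    have hpnorm : Tendsto (fun n => ‖(cfun n).1‖) atTop (𝓝 ‖x‖) := by
      simp_rw [fun n => hcfst n]
      exact hx.norm
    refine blowup_contradiction hDclosed hDconv hD0 hDne.choose_spec cfun hcfun htop ?_
    exact Tendsto.div_atTop hpnorm htop

end Main
section Main2

variable {E F : Type*} [NormedAddCommGroup E] [NormedSpace ℝ E] [FiniteDimensional ℝ E]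
  [NormedAddCommGroup F] [NormedSpace ℝ F] [FiniteDimensional ℝ F]

variable {C : Set (E × F)}

theorem recCone_fst_image (hC : IsClosed C) (hconvC : Convex ℝ C) (hne : C.Nonempty)
    (hsym : ∀ y : F, ((0:E), y) ∈ recCone C → ((0:E), -y) ∈ recCone C) :
    recCone (Prod.fst '' C) = Prod.fst '' recCone C := by
  apply Set.Subset.antisymm
  · -- hard direction
    intro x hx
    obtain ⟨D, hDclosed, hDconv, hDne, hDC, hfst, hD0⟩ :=
      exists_good_slice hC hconvC hne hsym
    obtain ⟨d₀, hd₀⟩ := hDne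
    -- points a + (n+1) x are in fst '' D
    have hpts : ∀ n : ℕ, ∃ y : F, (d₀.1 + ((n:ℝ) + 1) • x, y) ∈ D := by
      intro n
      have : d₀.1 + ((n:ℝ) + 1) • x ∈ Prod.fst '' C :=
        hx d₀.1 ⟨d₀, hDC hd₀, rfl⟩ _ (by positivity : (0:ℝ) ≤ (n:ℝ)+1)
      rw [← hfst] at this
      obtain ⟨c, hc, hceq⟩ := this
      exact ⟨c.2, by rwa [← hceq, Prod.mk.eta]⟩
    choose y hy using hpts
    set c : ℕ → E × F := fun n => (d₀.1 + ((n:ℝ) + 1) • x, y n) with hc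
    rcases seq_dichotomy (fun n => ‖y n‖ / ((n:ℝ) + 1)) with ⟨K, hK⟩ | htop
    · -- bounded subsequence case
      obtain ⟨φ, hφ, hφK⟩ := extraction_of_frequently_atTop hK
      set w : ℕ → E × F := fun n => ((φ n : ℝ) + 1)⁻¹ • (c (φ n) - d₀) with hwdef
      have hwb : ∀ n, w n ∈ Metric.closedBall (0 : E × F) (max ‖x‖ (K + ‖d₀.2‖)) := by
        intro n
        rw [Metric.mem_closedBall, dist_zero_right, Prod.norm_def]
        have hpos : (0:ℝ) < (φ n : ℝ) + 1 := by positivity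
        have h1 : (w n).1 = x := by
          have : (c (φ n)).1 - d₀.1 = ((φ n : ℝ) + 1) • x := by
            simp [hc]
          show (((φ n : ℝ) + 1)⁻¹ • (c (φ n) - d₀)).1 = x
          rw [Prod.smul_fst]
          show ((φ n : ℝ) + 1)⁻¹ • ((c (φ n)).1 - d₀.1) = x
          rw [this, smul_smul, inv_mul_cancel₀ hpos.ne', one_smul]
        have h2 : ‖(w n).2‖ ≤ K + ‖d₀.2‖ := by
          show ‖((φ n : ℝ) + 1)⁻¹ • ((c (φ n)).2 - d₀.2)‖ ≤ K + ‖d₀.2‖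
          rw [norm_smul, norm_inv, Real.norm_eq_abs, abs_of_pos hpos, inv_mul_le_iff₀ hpos]
          have hyn : ‖y (φ n)‖ ≤ K * ((φ n : ℝ) + 1) := by
            have := hφK n
            rw [div_le_iff₀ (by positivity : (0:ℝ) < (φ n : ℝ) + 1)] at this
            exact this
          have hc2 : (c (φ n)).2 = y (φ n) := rfl
          calc ‖(c (φ n)).2 - d₀.2‖ ≤ ‖(c (φ n)).2‖ + ‖d₀.2‖ := norm_sub_le _ _
            _ ≤ K * ((φ n : ℝ) + 1) + ‖d₀.2‖ * 1 := by rw [hc2]; linarith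
            _ ≤ K * ((φ n : ℝ) + 1) + ‖d₀.2‖ * ((φ n : ℝ) + 1) := by
                have : (1:ℝ) ≤ (φ n : ℝ) + 1 := by
                  have := Nat.cast_nonneg (α := ℝ) (φ n); linarith
                nlinarith [norm_nonneg d₀.2]
            _ = ((φ n : ℝ) + 1) * (K + ‖d₀.2‖) := by ring
        rw [h1]
        exact max_le_max le_rfl h2
      obtain ⟨d, hdball, σ, hσ, hdtend⟩ :=
        (isCompact_closedBall (0 : E × F) (max ‖x‖ (K + ‖d₀.2‖))).tendsto_subseq hwb
      have hφσtop : Tendsto (fun n => ((φ (σ n) : ℝ) + 1)) atTop atTop := by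
        apply tendsto_atTop_mono (fun n => ?_)
          (tendsto_natCast_atTop_atTop (R := ℝ) |>.comp (hφ.comp hσ).tendsto_atTop)
        simp
      have hdrec : d ∈ recCone D := by
        apply mem_recCone_of_blowup hDclosed hDconv hd₀ (fun n => c (φ (σ n)))
          (fun n => hy _) (fun n => ((φ (σ n) : ℝ) + 1)) hφσtop
        exact hdtend
      have hd1 : d.1 = x := by
        have ht1 : Tendsto (fun n => (w (σ n)).1) atTop (𝓝 d.1) :=
          (continuous_fst.tendsto d).comp hdtend
        have hwx : ∀ n, (w n).1 = x := by
          intro n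
          have hpos : (0:ℝ) < (φ n : ℝ) + 1 := by positivity
          show (((φ n : ℝ) + 1)⁻¹ • (c (φ n) - d₀)).1 = x
          rw [Prod.smul_fst]
          show ((φ n : ℝ) + 1)⁻¹ • ((c (φ n)).1 - d₀.1) = x
          have : (c (φ n)).1 - d₀.1 = ((φ n : ℝ) + 1) • x := by simp [hc]
          rw [this, smul_smul, inv_mul_cancel₀ hpos.ne', one_smul]
        simp_rw [fun n => hwx (σ n)] at ht1
        exact (tendsto_nhds_unique tendsto_const_nhds ht1).symm
      refine ⟨d, ?_, hd1⟩
      exact recCone_subset_of_subset hC hconvC hDC ⟨d₀, hd₀⟩ hdrec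
    · -- unbounded case: contradiction
      exfalso
      have hy2top : Tendsto (fun n => ‖(c n).2‖) atTop atTop := by
        apply tendsto_atTop_mono (fun n => ?_) htop
        show ‖y n‖ / ((n:ℝ) + 1) ≤ ‖(c n).2‖
        have hc2 : (c n).2 = y n := rfl
        rw [hc2, div_le_iff₀ (by positivity : (0:ℝ) < (n:ℝ)+1)]
        nlinarith [norm_nonneg (y n), Nat.cast_nonneg (α := ℝ) n]
      refine blowup_contradiction hDclosed hDconv hD0 hd₀ c hy hy2top ?_
      -- ‖(c n).1‖ / ‖(c n).2‖ → 0
      have hub : ∀ᶠ n in atTop, ‖(c n).1‖ / ‖(c n).2‖ ≤ (‖d₀.1‖ + ‖x‖) / (‖y n‖ / ((n:ℝ)+1)) := by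
        filter_upwards [htop.eventually_ge_atTop 1] with n hn
        have hypos : (0:ℝ) < ‖y n‖ := by
          have h0 : (0:ℝ) < ‖y n‖ / ((n:ℝ)+1) := lt_of_lt_of_le one_pos hn
          rcases div_pos_iff.mp h0 with ⟨hh, _⟩ | ⟨_, hh⟩
          · exact hh
          · have : (0:ℝ) < (n:ℝ)+1 := by positivity
            linarith
        show ‖d₀.1 + ((n:ℝ) + 1) • x‖ / ‖y n‖ ≤ (‖d₀.1‖ + ‖x‖) / (‖y n‖ / ((n:ℝ)+1))
        rw [div_div_eq_mul_div]
        have hnum : ‖d₀.1 + ((n:ℝ) + 1) • x‖ ≤ (‖d₀.1‖ + ‖x‖) * ((n:ℝ)+1) := by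
          calc ‖d₀.1 + ((n:ℝ) + 1) • x‖ ≤ ‖d₀.1‖ + ((n:ℝ)+1) * ‖x‖ := by
                refine le_trans (norm_add_le _ _) ?_
                rw [norm_smul, Real.norm_eq_abs, abs_of_pos (by positivity : (0:ℝ) < (n:ℝ)+1)]
            _ ≤ (‖d₀.1‖ + ‖x‖) * ((n:ℝ)+1) := by
                have h1 : (1:ℝ) ≤ (n:ℝ)+1 := by
                  have := Nat.cast_nonneg (α := ℝ) n; linarith
                nlinarith [norm_nonneg d₀.1, norm_nonneg x]
        exact (div_le_div_iff_of_pos_right hypos).mpr hnum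
      have hg : Tendsto (fun n => (‖d₀.1‖ + ‖x‖) / (‖y n‖ / ((n:ℝ)+1))) atTop (𝓝 0) :=
        Tendsto.div_atTop tendsto_const_nhds htop
      exact squeeze_zero' (Eventually.of_forall fun n => by positivity) hub hg
  · -- easy direction
    rintro x ⟨d, hd, rfl⟩
    intro p hp t ht
    obtain ⟨q, hq, rfl⟩ := hp
    exact ⟨q + t • d, hd q hq t ht, rfl⟩

end Main2
section ERealLemmas

instance posRealNonempty : Nonempty {l : ℝ // 0 < l} := ⟨⟨1, one_pos⟩⟩

lemma ereal_eq_of_forall_real_le {a b : EReal} (h : ∀ μ : ℝ, a ≤ (μ:EReal) ↔ b ≤ (μ:EReal)) :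
    a = b := by
  by_contra hne
  rcases lt_or_gt_of_ne hne with hlt | hlt
  · obtain ⟨z, hz1, hz2⟩ := EReal.exists_between_coe_real hlt
    exact absurd ((h z).mp hz1.le) (not_le.2 hz2)
  · obtain ⟨z, hz1, hz2⟩ := EReal.exists_between_coe_real hlt
    exact absurd ((h z).mpr hz1.le) (not_le.2 hz2)

lemma ereal_quot_le_iff {X : EReal} {l r μ : ℝ} (hl : 0 < l) :
    (((l⁻¹ : ℝ) : EReal) * (X - (r : EReal)) ≤ (μ : EReal)) ↔ X ≤ ((r + l * μ : ℝ) : EReal) := by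
  have hlinv : (0:EReal) < ((l⁻¹:ℝ):EReal) := by
    rw [EReal.coe_pos]; positivity
  induction X using EReal.rec with
  | bot =>
    have h1 : (⊥:EReal) - (r:EReal) = ⊥ := by
      rw [sub_eq_add_neg, ← EReal.coe_neg, EReal.bot_add]
    rw [h1, EReal.mul_bot_of_pos hlinv]
    simp
  | coe x =>
    rw [show ((x:EReal) - (r:EReal)) = ((x - r : ℝ):EReal) from (EReal.coe_sub x r).symm,
      ← EReal.coe_mul, EReal.coe_le_coe_iff, EReal.coe_le_coe_iff,
      inv_mul_le_iff₀ hl]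
    constructor <;> intro <;> nlinarith
  | top =>
    rw [EReal.top_sub_coe, EReal.mul_top_of_pos hlinv]
    simp only [top_le_iff, EReal.coe_ne_top, false_iff]

lemma recFn_le_real_iff {V : Type*} [AddCommGroup V] [Module ℝ V]
    {f : V → EReal} {b : V} {r : ℝ} (hb : f b = (r:ℝ)) (d : V) (μ : ℝ) :
    recFn f b d ≤ (μ:EReal) ↔ ∀ l : ℝ, 0 < l → f (b + l • d) ≤ ((r + l * μ : ℝ) : EReal) := by
  rw [recFn, iSup_le_iff]
  constructor
  · intro H l hl
    have := H ⟨l, hl⟩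
    rw [hb] at this
    exact (ereal_quot_le_iff hl).mp this
  · intro H l
    rw [hb]
    exact (ereal_quot_le_iff l.2).mpr (H l.1 l.2)

lemma recFn_zero_eval {V : Type*} [AddCommGroup V] [Module ℝ V]
    {f : V → EReal} {b : V} {r : ℝ} (hb : f b = (r:ℝ)) : recFn f b (0:V) = 0 := by
  rw [recFn]
  have : ∀ l : {l : ℝ // 0 < l}, (((l:ℝ)⁻¹ : ℝ) : EReal) * (f (b + (l:ℝ) • (0:V)) - f b) = 0 := by
    intro l
    rw [smul_zero, add_zero, hb, ← EReal.coe_sub, sub_self]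
    simp
  simp only [this, iSup_const]

lemma isClosed_epigraph {X : Type*} [TopologicalSpace X] {f : X → EReal}
    (hf : LowerSemicontinuous f) : IsClosed {q : X × ℝ | f q.1 ≤ ((q.2 : ℝ):EReal)} := by
  rw [← isOpen_compl_iff, isOpen_iff_mem_nhds]
  intro q hq
  rw [Set.mem_compl_iff, Set.mem_setOf_eq, not_le] at hq
  obtain ⟨z, hz1, hz2⟩ := EReal.exists_between_coe_real hq
  have h1 : ∀ᶠ p in 𝓝 q.1, (z:EReal) < f p := hf q.1 (z:EReal) hz2
  have h2 : ∀ᶠ p : X × ℝ in 𝓝 q, (z:EReal) < f p.1 := (continuous_fst.tendsto q).eventually h1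
  have hq2z : q.2 < z := by exact_mod_cast hz1
  have h3 : ∀ᶠ p : X × ℝ in 𝓝 q, p.2 < z := (continuous_snd.tendsto q).eventually
    (eventually_lt_nhds hq2z)
  filter_upwards [h2, h3] with p hp2 hp3
  rw [Set.mem_compl_iff, Set.mem_setOf_eq, not_le]
  exact lt_trans (by exact_mod_cast hp3) hp2

end ERealLemmas

lemma ereal_three_cases (x : EReal) : x = ⊥ ∨ x = ⊤ ∨ ∃ r : ℝ, x = (r:EReal) := by
  induction x using EReal.rec with
  | bot => exact Or.inl rfl
  | coe r => exact Or.inr (Or.inr ⟨r, rfl⟩)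
  | top => exact Or.inr (Or.inl rfl)

/-- if `N = {x₂ : h^∞(0,x₂) ≤ 0}` is a linear subspace, then the marginal
function `g(x₁) = inf_{x₂} h(x₁,x₂)` is lsc and convex, the infimum is attained whenever
`g(x₁) < +∞`, and `g^∞(x₁) = inf_{x₂} h^∞(x₁,x₂)`. -/
theorem stmt2 (n₁ n₂ : ℕ)
    (h : (Fin n₁ → ℝ) × (Fin n₂ → ℝ) → EReal)
    (hconv : EConvex h) (hlsc : LowerSemicontinuous h)
    (hproper : (∀ p, h p ≠ ⊥) ∧ ∃ p, h p ≠ ⊤)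
    (pbar : (Fin n₁ → ℝ) × (Fin n₂ → ℝ)) (hpbar : h pbar ≠ ⊤)
    (hN : ∃ W : Submodule ℝ (Fin n₂ → ℝ),
      {x₂ : Fin n₂ → ℝ | recFn h pbar (0, x₂) ≤ 0} = (W : Set (Fin n₂ → ℝ))) :
    LowerSemicontinuous (fun x₁ : Fin n₁ → ℝ => ⨅ x₂ : Fin n₂ → ℝ, h (x₁, x₂)) ∧
    EConvex (fun x₁ : Fin n₁ → ℝ => ⨅ x₂ : Fin n₂ → ℝ, h (x₁, x₂)) ∧
    (∀ x₁ : Fin n₁ → ℝ, (⨅ x₂ : Fin n₂ → ℝ, h (x₁, x₂)) ≠ ⊤ →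
      ∃ x₂ : Fin n₂ → ℝ, h (x₁, x₂) = ⨅ x₂' : Fin n₂ → ℝ, h (x₁, x₂')) ∧
    (∀ x₁ : Fin n₁ → ℝ,
      recFn (fun x₁' : Fin n₁ → ℝ => ⨅ x₂ : Fin n₂ → ℝ, h (x₁', x₂)) pbar.1 x₁
        = ⨅ x₂ : Fin n₂ → ℝ, recFn h pbar (x₁, x₂)) := by
  classical
  obtain ⟨WN, hWN⟩ := hN
  set g : (Fin n₁ → ℝ) → EReal := fun x₁ => ⨅ x₂ : Fin n₂ → ℝ, h (x₁, x₂) with hgdef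
  have hpbot : h pbar ≠ ⊥ := hproper.1 pbar
  set r₀ : ℝ := (h pbar).toReal with hr₀
  have hbr : h pbar = (r₀ : EReal) := (EReal.coe_toReal hpbar hpbot).symm
  -- the reshuffled epigraph
  set C : Set (((Fin n₁ → ℝ) × ℝ) × (Fin n₂ → ℝ)) := {q | h (q.1.1, q.2) ≤ (q.1.2 : EReal)} with hCdef
  have hCclosed : IsClosed C := by
    have hcont : Continuous (fun q : ((Fin n₁ → ℝ) × ℝ) × (Fin n₂ → ℝ) => (((q.1.1, q.2) : (Fin n₁ → ℝ) × (Fin n₂ → ℝ)), q.1.2)) := by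
      exact ((continuous_fst.fst.prodMk continuous_snd).prodMk continuous_fst.snd)
    exact (isClosed_epigraph hlsc).preimage hcont
  have hCconv : Convex ℝ C := by
    intro q hq q' hq' a b ha hb hab
    have key := hconv (q.1.1, q.2) (q'.1.1, q'.2) a b ha hb hab
    have hpt : (a • (q.1.1, q.2) + b • (q'.1.1, q'.2) : (Fin n₁ → ℝ) × (Fin n₂ → ℝ))
        = ((a • q + b • q').1.1, (a • q + b • q').2) := by
      ext <;> simp
    rw [hpt] at key
    refine le_trans key ?_
    have h1 : (a : EReal) * h (q.1.1, q.2) ≤ (a : EReal) * (q.1.2 : EReal) :=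
      mul_le_mul_of_nonneg_left hq (by exact_mod_cast ha)
    have h2 : (b : EReal) * h (q'.1.1, q'.2) ≤ (b : EReal) * (q'.1.2 : EReal) :=
      mul_le_mul_of_nonneg_left hq' (by exact_mod_cast hb)
    refine le_trans (add_le_add h1 h2) ?_
    have : ((a • q + b • q').1.2 : EReal) = (a : EReal) * (q.1.2 : EReal) + (b : EReal) * (q'.1.2 : EReal) := by
      have : (a • q + b • q').1.2 = a * q.1.2 + b * q'.1.2 := by simp [smul_eq_mul]
      rw [this]
      push_cast
      ring_nf
    rw [this]
  set c₀ : ((Fin n₁ → ℝ) × ℝ) × (Fin n₂ → ℝ) := ((pbar.1, r₀), pbar.2) with hc₀def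
  have hc₀ : c₀ ∈ C := by
    show h (pbar.1, pbar.2) ≤ (r₀ : EReal)
    rw [Prod.mk.eta, hbr]
  have hCne : C.Nonempty := ⟨c₀, hc₀⟩
  -- the bridge between recFn and recCone C
  have hbridge : ∀ (d₁ : Fin n₁ → ℝ) (μ : ℝ) (d₂ : Fin n₂ → ℝ),
      (((d₁, μ), d₂) ∈ recCone C) ↔ recFn h pbar (d₁, d₂) ≤ (μ : EReal) := by
    intro d₁ μ d₂
    have hpteq : ∀ l : ℝ, c₀ + l • (((d₁, μ), d₂) : ((Fin n₁ → ℝ) × ℝ) × (Fin n₂ → ℝ))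
        = ((pbar.1 + l • d₁, r₀ + l * μ), pbar.2 + l • d₂) := by
      intro l; ext <;> simp [hc₀def, smul_eq_mul]
    constructor
    · intro H
      rw [recFn_le_real_iff hbr]
      intro l hl
      have := H c₀ hc₀ l hl.le
      rw [hpteq l] at this
      have hmem : h (pbar.1 + l • d₁, pbar.2 + l • d₂) ≤ ((r₀ + l * μ : ℝ) : EReal) := this
      have hpt2 : pbar + l • ((d₁, d₂) : (Fin n₁ → ℝ) × (Fin n₂ → ℝ))
          = (pbar.1 + l • d₁, pbar.2 + l • d₂) := by ext <;> simp
      rwa [hpt2]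
    · intro H
      apply mem_recCone_of_ray hCclosed hCconv hc₀
      intro t ht
      rcases eq_or_lt_of_le ht with rfl | ht'
      · simpa using hc₀
      · rw [recFn_le_real_iff hbr] at H
        have := H t ht'
        rw [hpteq t]
        show h (pbar.1 + t • d₁, pbar.2 + t • d₂) ≤ ((r₀ + t * μ : ℝ) : EReal)
        have hpt2 : pbar + t • ((d₁, d₂) : (Fin n₁ → ℝ) × (Fin n₂ → ℝ))
            = (pbar.1 + t • d₁, pbar.2 + t • d₂) := by ext <;> simp
        rwa [hpt2] at this
  -- symmetry hypothesis from hN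
  have hWiff : ∀ y : Fin n₂ → ℝ, (((0 : Fin n₁ → ℝ), (0:ℝ)), y) ∈ recCone C ↔ y ∈ WN := by
    intro y
    rw [hbridge]
    constructor
    · intro hy
      have : y ∈ {x₂ : Fin n₂ → ℝ | recFn h pbar (0, x₂) ≤ 0} := by
        have h00 : ((0 : Fin n₁ → ℝ), y) = (((0,y)) : (Fin n₁ → ℝ) × (Fin n₂ → ℝ)) := rfl
        simpa using hy
      rwa [hWN] at this
    · intro hy
      have : y ∈ {x₂ : Fin n₂ → ℝ | recFn h pbar (0, x₂) ≤ 0} := by rw [hWN]; exact hy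
      simpa using this
  have hsym : ∀ y : Fin n₂ → ℝ, ((0 : (Fin n₁ → ℝ) × ℝ), y) ∈ recCone C → ((0 : (Fin n₁ → ℝ) × ℝ), -y) ∈ recCone C := by
    intro y hy
    have h0 : ((0 : (Fin n₁ → ℝ) × ℝ)) = (((0 : Fin n₁ → ℝ), (0:ℝ)) : (Fin n₁ → ℝ) × ℝ) := rfl
    rw [h0] at hy ⊢
    rw [hWiff] at hy
    rw [hWiff]
    exact neg_mem hy
  -- the projection
  set P : Set ((Fin n₁ → ℝ) × ℝ) := Prod.fst '' C with hPdef
  have hPclosed : IsClosed P := isClosed_fst_image hCclosed hCconv hCne hsym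
  have hPrec : recCone P = Prod.fst '' recCone C :=
    recCone_fst_image hCclosed hCconv hCne hsym
  have hPconv : Convex ℝ P := by
    have := hCconv.linear_image (LinearMap.fst ℝ ((Fin n₁ → ℝ) × ℝ) (Fin n₂ → ℝ))
    simpa using this
  -- epigraph characterization of the projection
  have hPiff : ∀ (x₁ : Fin n₁ → ℝ) (t : ℝ), ((x₁, t) : (Fin n₁ → ℝ) × ℝ) ∈ P ↔ g x₁ ≤ (t : EReal) := by
    intro x₁ t
    constructor
    · rintro ⟨q, hq, hq1⟩
      have hxq : q.1.1 = x₁ := by rw [hq1]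
      have htq : q.1.2 = t := by rw [hq1]
      refine le_trans (iInf_le _ q.2) ?_
      rw [← hxq, ← htq]
      exact hq
    · intro hgx
      have hsec : IsClosed {s : ℝ | ((x₁, s) : (Fin n₁ → ℝ) × ℝ) ∈ P} :=
        hPclosed.preimage (Continuous.prodMk_right x₁)
      have hsub : Set.Ioi t ⊆ {s : ℝ | ((x₁, s) : (Fin n₁ → ℝ) × ℝ) ∈ P} := by
        intro s hs
        have : g x₁ < (s : EReal) := lt_of_le_of_lt hgx (by exact_mod_cast hs)
        rw [hgdef, iInf_lt_iff] at this
        obtain ⟨x₂, hx₂⟩ := this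
        exact ⟨((x₁, s), x₂), hx₂.le, rfl⟩
      have : t ∈ closure (Set.Ioi t) := by rw [closure_Ioi]; exact Set.self_mem_Ici
      have := closure_mono hsub this
      rwa [hsec.closure_eq] at this
  -- g is never ⊥
  have hgbot : ∀ x₁, g x₁ ≠ ⊥ := by
    intro x₁ hbot
    have hall : ∀ s : ℝ, ((x₁, s) : (Fin n₁ → ℝ) × ℝ) ∈ P := fun s =>
      (hPiff x₁ s).mpr (by rw [hbot]; exact bot_le)
    have hray : ((((0 : Fin n₁ → ℝ), (-1:ℝ)) : (Fin n₁ → ℝ) × ℝ)) ∈ recCone P := by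
      apply mem_recCone_of_ray hPclosed hPconv (hall 0)
      intro t ht
      have : (((x₁, 0) : (Fin n₁ → ℝ) × ℝ) + t • (((0 : Fin n₁ → ℝ), (-1:ℝ)) : (Fin n₁ → ℝ) × ℝ)) = ((x₁, -t) : (Fin n₁ → ℝ) × ℝ) := by
        ext <;> simp
      rw [this]
      exact hall _
    rw [hPrec] at hray
    obtain ⟨q, hqrec, hq1⟩ := hray
    have hq' : (((0 : Fin n₁ → ℝ), (-1:ℝ)), q.2) ∈ recCone C := by
      rw [← hq1, Prod.mk.eta]; exact hqrec
    rw [hbridge] at hq'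
    have hq0 : recFn h pbar (0, q.2) ≤ (0 : EReal) :=
      le_trans hq' (by exact_mod_cast (by norm_num : (-1:ℝ) ≤ (0:ℝ)))
    have hqW : q.2 ∈ WN := by
      have : q.2 ∈ {x₂ : Fin n₂ → ℝ | recFn h pbar (0, x₂) ≤ 0} := hq0
      rwa [hWN] at this
    have hnegW : -q.2 ∈ WN := neg_mem hqW
    have hneg : (((0 : Fin n₁ → ℝ), (0:ℝ)), -q.2) ∈ recCone C := (hWiff (-q.2)).mpr hnegW
    have hsum := recCone_add_mem hCconv ((hbridge _ _ _).mpr hq') hneg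
    have hsumeq : ((((0 : Fin n₁ → ℝ), (-1:ℝ)), q.2) + (((0 : Fin n₁ → ℝ), (0:ℝ)), -q.2))
        = ((((0 : Fin n₁ → ℝ), (-1:ℝ)), (0 : Fin n₂ → ℝ)) : ((Fin n₁ → ℝ) × ℝ) × (Fin n₂ → ℝ)) := by
      ext <;> simp
    rw [hsumeq, hbridge] at hsum
    have hzero : recFn h pbar ((0 : Fin n₁ → ℝ), (0 : Fin n₂ → ℝ)) = 0 := by
      have : (((0 : Fin n₁ → ℝ), (0 : Fin n₂ → ℝ)) : (Fin n₁ → ℝ) × (Fin n₂ → ℝ)) = 0 := rfl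
      rw [this]
      exact recFn_zero_eval hbr
    rw [hzero] at hsum
    have : ¬ ((0:EReal) ≤ ((-1 : ℝ) : EReal)) := by
      rw [show ((0:EReal)) = (((0:ℝ)) : EReal) from rfl, EReal.coe_le_coe_iff]
      norm_num
    exact this hsum
  refine ⟨?_, ?_, ?_, ?_⟩
  · -- lower semicontinuity
    intro x y hy
    obtain ⟨z, hz1, hz2⟩ := EReal.exists_between_coe_real hy
    have hnmem : ((x, z) : (Fin n₁ → ℝ) × ℝ) ∉ P := by
      intro hmem
      exact absurd ((hPiff x z).mp hmem) (not_le.2 hz2)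
    have hopen : IsOpen {x' : Fin n₁ → ℝ | ((x', z) : (Fin n₁ → ℝ) × ℝ) ∉ P} := by
      have : {x' : Fin n₁ → ℝ | ((x', z) : (Fin n₁ → ℝ) × ℝ) ∉ P} = (fun x' => ((x', z) : (Fin n₁ → ℝ) × ℝ)) ⁻¹' Pᶜ := rfl
      rw [this]
      exact hPclosed.isOpen_compl.preimage (continuous_id.prodMk continuous_const)
    filter_upwards [hopen.mem_nhds hnmem] with x' hx'
    have : ¬ (g x' ≤ (z : EReal)) := fun hle => hx' ((hPiff x' z).mpr hle)
    exact lt_trans hz1 (not_le.1 this)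
  · -- convexity
    intro x y a b ha hb hab
    rcases eq_or_lt_of_le ha with rfl | ha'
    · have hb1 : b = 1 := by linarith
      subst hb1
      simp
    rcases eq_or_lt_of_le hb with rfl | hb'
    · have ha1 : a = 1 := by linarith
      subst ha1
      simp
    by_cases hgx : g x = ⊤
    · rw [hgx]
      have h1 : (a : EReal) * ⊤ = ⊤ := EReal.mul_top_of_pos (by exact_mod_cast ha')
      have h2 : (b : EReal) * g y ≠ ⊥ := by
        rcases ereal_three_cases (g y) with hgy | hgy | ⟨t, hgy⟩
        · exact absurd hgy (hgbot y)
        · rw [hgy, EReal.mul_top_of_pos (by exact_mod_cast hb')]; exact (by simp : (⊤:EReal) ≠ ⊥)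
        · rw [hgy, ← EReal.coe_mul]; exact EReal.coe_ne_bot _
      rw [h1, EReal.top_add_of_ne_bot h2]
      exact le_top
    by_cases hgy : g y = ⊤
    · rw [hgy]
      have h1 : (b : EReal) * ⊤ = ⊤ := EReal.mul_top_of_pos (by exact_mod_cast hb')
      have h2 : (a : EReal) * g x ≠ ⊥ := by
        rcases ereal_three_cases (g x) with hgx' | hgx' | ⟨t, hgx'⟩
        · exact absurd hgx' (hgbot x)
        · exact absurd hgx' hgx
        · rw [hgx', ← EReal.coe_mul]; exact EReal.coe_ne_bot _
      rw [h1, EReal.add_top_of_ne_bot h2]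
      exact le_top
    · have hgxr : g x = ((g x).toReal : EReal) := (EReal.coe_toReal hgx (hgbot x)).symm
      have hgyr : g y = ((g y).toReal : EReal) := (EReal.coe_toReal hgy (hgbot y)).symm
      have hx' : ((x, (g x).toReal) : (Fin n₁ → ℝ) × ℝ) ∈ P := (hPiff _ _).mpr (le_of_eq hgxr)
      have hy' : ((y, (g y).toReal) : (Fin n₁ → ℝ) × ℝ) ∈ P := (hPiff _ _).mpr (le_of_eq hgyr)
      have hmem := hPconv hx' hy' ha hb hab
      have hpteq : (a • ((x, (g x).toReal) : (Fin n₁ → ℝ) × ℝ) + b • ((y, (g y).toReal) : (Fin n₁ → ℝ) × ℝ))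
          = ((a • x + b • y, a * (g x).toReal + b * (g y).toReal) : (Fin n₁ → ℝ) × ℝ) := by
        ext <;> simp [smul_eq_mul]
      rw [hpteq] at hmem
      have := (hPiff _ _).mp hmem
      refine le_trans this ?_
      rw [hgxr, hgyr, ← EReal.coe_mul, ← EReal.coe_mul, ← EReal.coe_add]
      exact le_refl _
  · -- attainment
    intro x₁ hne
    have hnb : g x₁ ≠ ⊥ := hgbot x₁
    have hgr : g x₁ = ((g x₁).toReal : EReal) := (EReal.coe_toReal hne hnb).symm
    have hmem : ((x₁, (g x₁).toReal) : (Fin n₁ → ℝ) × ℝ) ∈ P := (hPiff _ _).mpr (le_of_eq hgr)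
    obtain ⟨q, hq, hq1⟩ := hmem
    have hxq : q.1.1 = x₁ := by rw [hq1]
    have htq : q.1.2 = (g x₁).toReal := by rw [hq1]
    refine ⟨q.2, le_antisymm ?_ (iInf_le _ q.2)⟩
    have hq2 : h (q.1.1, q.2) ≤ (q.1.2 : EReal) := hq
    rw [hxq, htq, ← hgr] at hq2
    exact hq2
  · -- recession function of g
    intro x₁
    have hgp_top : g pbar.1 ≠ ⊤ := by
      intro htop
      have : g pbar.1 ≤ h pbar := by
        rw [hgdef]
        refine le_trans (iInf_le _ pbar.2) ?_
        rw [Prod.mk.eta]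
      rw [htop, hbr] at this
      exact absurd (top_le_iff.mp this) (EReal.coe_ne_top _)
    have hgp_bot : g pbar.1 ≠ ⊥ := hgbot pbar.1
    set ρ : ℝ := (g pbar.1).toReal with hρ
    have hgpr : g pbar.1 = (ρ : EReal) := (EReal.coe_toReal hgp_top hgp_bot).symm
    have hbase : ((pbar.1, ρ) : (Fin n₁ → ℝ) × ℝ) ∈ P := (hPiff _ _).mpr (le_of_eq hgpr)
    -- bridge for g
    have hbridgeg : ∀ (d : Fin n₁ → ℝ) (μ : ℝ),
        (((d, μ) : (Fin n₁ → ℝ) × ℝ) ∈ recCone P) ↔ recFn g pbar.1 d ≤ (μ : EReal) := by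
      intro d μ
      have hpteq : ∀ l : ℝ, (((pbar.1, ρ) : (Fin n₁ → ℝ) × ℝ) + l • ((d, μ) : (Fin n₁ → ℝ) × ℝ))
          = ((pbar.1 + l • d, ρ + l * μ) : (Fin n₁ → ℝ) × ℝ) := by
        intro l; ext <;> simp [smul_eq_mul]
      constructor
      · intro H
        rw [recFn_le_real_iff hgpr]
        intro l hl
        have := H _ hbase l hl.le
        rw [hpteq l] at this
        exact (hPiff _ _).mp this
      · intro H
        apply mem_recCone_of_ray hPclosed hPconv hbase
        intro t ht
        rcases eq_or_lt_of_le ht with rfl | ht'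
        · simpa using hbase
        · rw [recFn_le_real_iff hgpr] at H
          rw [hpteq t]
          exact (hPiff _ _).mpr (H t ht')
    apply ereal_eq_of_forall_real_le
    intro μ
    rw [← hbridgeg x₁ μ]
    constructor
    · intro H
      rw [hPrec] at H
      obtain ⟨q, hqrec, hq1⟩ := H
      have hq' : ((x₁, μ), q.2) ∈ recCone C := by
        rw [← hq1, Prod.mk.eta]; exact hqrec
      rw [hbridge] at hq'
      exact le_trans (iInf_le _ q.2) hq'
    · intro H
      have hsec : IsClosed {s : ℝ | ((x₁, s) : (Fin n₁ → ℝ) × ℝ) ∈ recCone P} :=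
        (isClosed_recCone hPclosed).preimage (Continuous.prodMk_right x₁)
      have hsub : Set.Ioi μ ⊆ {s : ℝ | ((x₁, s) : (Fin n₁ → ℝ) × ℝ) ∈ recCone P} := by
        intro s hs
        have : (⨅ x₂ : Fin n₂ → ℝ, recFn h pbar (x₁, x₂)) < (s : EReal) :=
          lt_of_le_of_lt H (by exact_mod_cast hs)
        rw [iInf_lt_iff] at this
        obtain ⟨x₂, hx₂⟩ := this
        have : ((x₁, s), x₂) ∈ recCone C := (hbridge _ _ _).mpr hx₂.le
        rw [hPrec]
        exact ⟨_, this, rfl⟩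
      have : μ ∈ closure (Set.Ioi μ) := by rw [closure_Ioi]; exact Set.self_mem_Ici
      have := closure_mono hsub this
      rwa [hsec.closure_eq] at this
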